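/- Let σ > 0, let a(σ) = σ√(2/π), b(σ) = 2σφ(α/σ), and p(σ) = erfc(α/(σ√2)) for a fixed threshold α > 0, where φ is the standard normal density. Then (a(σ) + b(σ))²/(1 + 3p(σ)) > a(σ)², i.e. the 2-bit per-coordinate information ratio strictly exceeds the 1-bit ratio. -/

import Mathlib

open MeasureTheory Real

/-- Standard normal density `φ(t) = (2π)^{-1/2} e^{-t²/2}`. -/
noncomputable def stdNormalPDF (t : ℝ) : ℝ :=
  (Real.sqrt (2 * Real.pi))⁻¹ * Real.exp (-t ^ 2 / 2)

/-- Complementary error function `erfc(u) = (2/√π) ∫_u^∞ e^{-s²} ds`. -/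
noncomputable def erfc (u : ℝ) : ℝ :=
  (2 / Real.sqrt Real.pi) * ∫ s in Set.Ioi u, Real.exp (-s ^ 2)

/-! ### Auxiliary lemmas -/

lemma gauss_integrable : Integrable (fun s : ℝ => Real.exp (-s ^ 2)) := by
  have := integrable_exp_neg_mul_sq (b := (1:ℝ)) one_pos
  simpa using this

lemma gauss_Ioi_zero : ∫ s in Set.Ioi (0:ℝ), Real.exp (-s ^ 2) = Real.sqrt Real.pi / 2 := by
  have := integral_gaussian_Ioi 1
  simpa using this

lemma erfc_eq_one_sub (u : ℝ) (hu : 0 ≤ u) :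
    erfc u = 1 - (2 / Real.sqrt Real.pi) * ∫ s in (0:ℝ)..u, Real.exp (-s ^ 2) := by
  have hsplit : ((∫ s in Set.Ioc (0:ℝ) u, Real.exp (-s ^ 2)) +
      ∫ s in Set.Ioi u, Real.exp (-s ^ 2)) = ∫ s in Set.Ioi (0:ℝ), Real.exp (-s ^ 2) := by
    rw [← setIntegral_union (Set.Ioc_disjoint_Ioi le_rfl) measurableSet_Ioi
      gauss_integrable.integrableOn gauss_integrable.integrableOn,
      Set.Ioc_union_Ioi_eq_Ioi hu]
  rw [gauss_Ioi_zero] at hsplit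
  have hπ : (0:ℝ) < Real.sqrt Real.pi := Real.sqrt_pos.mpr Real.pi_pos
  rw [intervalIntegral.integral_of_le hu]
  unfold erfc
  field_simp
  linarith [hsplit]

lemma exp_quartic_lb {x : ℝ} (h0 : 0 ≤ x) (h1 : x ≤ 1) :
    1 - x + x ^ 2 / 2 - x ^ 3 / 6 - 5 * x ^ 4 / 96 ≤ Real.exp (-x) := by
  have hx : |(-x)| ≤ 1 := by rw [abs_neg, abs_of_nonneg h0]; exact h1
  have hb := Real.exp_bound hx (n := 4) (by norm_num)
  rw [abs_neg, abs_of_nonneg h0] at hb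
  have hsum : ∑ m ∈ Finset.range 4, (-x) ^ m / m.factorial = 1 - x + x ^ 2 / 2 - x ^ 3 / 6 := by
    simp [Finset.sum_range_succ, Nat.factorial]
    ring
  rw [hsum] at hb
  have h2 := (abs_sub_le_iff.mp hb).2
  norm_num [Nat.factorial] at h2 ⊢
  nlinarith [h2]

lemma poly_hasDeriv (s : ℝ) :
    HasDerivAt (fun t : ℝ => t - t ^ 3 / 3 + t ^ 5 / 10 - t ^ 7 / 42 - 5 * t ^ 9 / 864)
      (1 - s ^ 2 + s ^ 4 / 2 - s ^ 6 / 6 - 5 * s ^ 8 / 96) s := by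
  have h := (((((hasDerivAt_id s).sub ((hasDerivAt_pow 3 s).div_const 3)).add
      ((hasDerivAt_pow 5 s).div_const 10)).sub ((hasDerivAt_pow 7 s).div_const 42)).sub
      (((hasDerivAt_pow 9 s).const_mul (5:ℝ)).div_const 864))
  refine h.congr_deriv ?_
  push_cast
  ring

lemma erf_int_lb {u : ℝ} (h0 : 0 ≤ u) (h1 : u ≤ 1) :
    u - u ^ 3 / 3 + u ^ 5 / 10 - u ^ 7 / 42 - 5 * u ^ 9 / 864 ≤
      ∫ s in (0:ℝ)..u, Real.exp (-s ^ 2) := by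
  have hcontp : Continuous (fun s : ℝ => 1 - s ^ 2 + s ^ 4 / 2 - s ^ 6 / 6 - 5 * s ^ 8 / 96) := by
    continuity
  have hpoly : ∫ s in (0:ℝ)..u, (1 - s ^ 2 + s ^ 4 / 2 - s ^ 6 / 6 - 5 * s ^ 8 / 96) =
      u - u ^ 3 / 3 + u ^ 5 / 10 - u ^ 7 / 42 - 5 * u ^ 9 / 864 := by
    rw [intervalIntegral.integral_eq_sub_of_hasDerivAt (fun s _ => poly_hasDeriv s)
      (hcontp.intervalIntegrable 0 u)]
    norm_num
  rw [← hpoly]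
  apply intervalIntegral.integral_mono_on h0 (hcontp.intervalIntegrable 0 u)
    gauss_integrable.intervalIntegrable
  intro s hs
  have hs0 : 0 ≤ s := hs.1
  have hs1 : s ^ 2 ≤ 1 := by nlinarith [hs.2]
  have := exp_quartic_lb (x := s ^ 2) (by positivity) hs1
  calc 1 - s ^ 2 + s ^ 4 / 2 - s ^ 6 / 6 - 5 * s ^ 8 / 96
      = 1 - s ^ 2 + (s ^ 2) ^ 2 / 2 - (s ^ 2) ^ 3 / 6 - 5 * (s ^ 2) ^ 4 / 96 := by ring
    _ ≤ Real.exp (-s ^ 2) := this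

lemma xgauss_integrable : Integrable (fun s : ℝ => s * Real.exp (-s ^ 2)) := by
  have := integrable_mul_exp_neg_mul_sq (b := (1:ℝ)) one_pos
  simpa using this

lemma xgauss_Ioi (u : ℝ) :
    ∫ s in Set.Ioi u, s * Real.exp (-s ^ 2) = Real.exp (-u ^ 2) / 2 := by
  have hderiv : ∀ x ∈ Set.Ici u, HasDerivAt (fun s : ℝ => -Real.exp (-s ^ 2) / 2)
      (x * Real.exp (-x ^ 2)) x := by
    intro x _
    have h1 : HasDerivAt (fun s : ℝ => -s ^ 2) (-(2 * x)) x := by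
      have := (hasDerivAt_pow 2 x).neg
      refine this.congr_deriv ?_
      push_cast; ring
    have h2 := (h1.exp.neg).div_const 2
    refine h2.congr_deriv ?_
    ring
  have htends : Filter.Tendsto (fun x : ℝ => -Real.exp (-x ^ 2) / 2) Filter.atTop (nhds 0) := by
    have h1 : Filter.Tendsto (fun x : ℝ => -x ^ 2) Filter.atTop Filter.atBot :=
      Filter.tendsto_neg_atBot_iff.mpr (Filter.tendsto_pow_atTop (n := 2) (by norm_num))
    have h2 := (Real.tendsto_exp_atBot.comp h1).neg.div_const (2:ℝ)
    simpa using h2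
  have := integral_Ioi_of_hasDerivAt_of_tendsto' hderiv xgauss_integrable.integrableOn htends
  rw [this]
  ring

lemma erfc_le {u : ℝ} (hu : 0 < u) : erfc u ≤ Real.exp (-u ^ 2) / (u * Real.sqrt Real.pi) := by
  have hπ : (0:ℝ) < Real.sqrt Real.pi := Real.sqrt_pos.mpr Real.pi_pos
  have hmono : (∫ s in Set.Ioi u, Real.exp (-s ^ 2)) ≤
      ∫ s in Set.Ioi u, u⁻¹ * (s * Real.exp (-s ^ 2)) := by
    apply setIntegral_mono_on gauss_integrable.integrableOn
      ((xgauss_integrable.integrableOn).const_mul u⁻¹) measurableSet_Ioi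
    intro s hs
    have hsu : u ≤ s := le_of_lt hs
    have : 1 * Real.exp (-s ^ 2) ≤ (u⁻¹ * s) * Real.exp (-s ^ 2) := by
      apply mul_le_mul_of_nonneg_right _ (Real.exp_pos _).le
      rw [← div_eq_inv_mul]
      rw [le_div_iff₀ hu]
      linarith
    linarith [this]
  rw [MeasureTheory.integral_const_mul, xgauss_Ioi] at hmono
  unfold erfc
  have h2 : (2 / Real.sqrt Real.pi) * (∫ s in Set.Ioi u, Real.exp (-s ^ 2)) ≤
      (2 / Real.sqrt Real.pi) * (u⁻¹ * (Real.exp (-u ^ 2) / 2)) := by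
    apply mul_le_mul_of_nonneg_left hmono (by positivity)
  calc (2 / Real.sqrt Real.pi) * (∫ s in Set.Ioi u, Real.exp (-s ^ 2))
      ≤ (2 / Real.sqrt Real.pi) * (u⁻¹ * (Real.exp (-u ^ 2) / 2)) := h2
    _ = Real.exp (-u ^ 2) / (u * Real.sqrt Real.pi) := by
        field_simp

lemma sqrt_pi_lt : Real.sqrt Real.pi < 1.7725 := by
  rw [show (1.7725:ℝ) = Real.sqrt (1.7725 ^ 2) by rw [Real.sqrt_sq]; norm_num]
  apply Real.sqrt_lt_sqrt Real.pi_pos.le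
  nlinarith [Real.pi_lt_d6]

lemma sqrt_pi_gt : (1.772:ℝ) < Real.sqrt Real.pi := by
  rw [show (1.772:ℝ) = Real.sqrt (1.772 ^ 2) by rw [Real.sqrt_sq]; norm_num]
  apply Real.sqrt_lt_sqrt (by norm_num)
  nlinarith [Real.pi_gt_d6]

set_option maxHeartbeats 2000000 in
lemma key_ineq {u : ℝ} (hu : 0 < u) :
    3 * erfc u < 2 * Real.exp (-u ^ 2) + Real.exp (-u ^ 2) ^ 2 := by
  have hπ : (0:ℝ) < Real.sqrt Real.pi := Real.sqrt_pos.mpr Real.pi_pos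
  rcases le_or_gt u 0.88 with hc | hc
  · -- small u
    have h1 : u ≤ 1 := by linarith
    have hu2 : u ^ 2 ≤ 1 := by nlinarith
    have hI := erf_int_lb hu.le h1
    have hq := exp_quartic_lb (x := u ^ 2) (by positivity) hu2
    have hlin : 1 - u ^ 2 ≤ Real.exp (-u ^ 2) := by
      have := Real.add_one_le_exp (-u ^ 2); linarith
    have hsq : (1 - u ^ 2) ^ 2 ≤ Real.exp (-u ^ 2) ^ 2 :=
      pow_le_pow_left₀ (by nlinarith) hlin 2
    have p3 : u ^ 3 ≤ u := by
      calc u ^ 3 = u ^ 2 * u := by ring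
        _ ≤ 1 * u := by apply mul_le_mul_of_nonneg_right hu2 hu.le
        _ = u := by ring
    have p7 : u ^ 7 ≤ u := by
      calc u ^ 7 = (u ^ 2) ^ 3 * u := by ring
        _ ≤ 1 ^ 3 * u := by
            apply mul_le_mul_of_nonneg_right (pow_le_pow_left₀ (by positivity) hu2 3) hu.le
        _ = u := by ring
    have p9 : u ^ 9 ≤ u := by
      calc u ^ 9 = (u ^ 2) ^ 4 * u := by ring
        _ ≤ 1 ^ 4 * u := by
            apply mul_le_mul_of_nonneg_right (pow_le_pow_left₀ (by positivity) hu2 4) hu.le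
        _ = u := by ring
    have hL0 : (0:ℝ) ≤ u - u ^ 3 / 3 + u ^ 5 / 10 - u ^ 7 / 42 - 5 * u ^ 9 / 864 := by
      have : (0:ℝ) ≤ u ^ 5 / 10 := by positivity
      linarith
    have hc2 : (1.128:ℝ) ≤ 2 / Real.sqrt Real.pi := by
      rw [le_div_iff₀ hπ]
      nlinarith [sqrt_pi_lt]
    have hJc : (1.128:ℝ) * (u - u ^ 3 / 3 + u ^ 5 / 10 - u ^ 7 / 42 - 5 * u ^ 9 / 864) ≤
        (2 / Real.sqrt Real.pi) * (∫ s in (0:ℝ)..u, Real.exp (-s ^ 2)) := by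
      apply mul_le_mul hc2 hI hL0 (by positivity)
    have p88 : ∀ k : ℕ, u ^ (k + 1) ≤ (0.88:ℝ) ^ k * u := by
      intro k
      calc u ^ (k + 1) = u ^ k * u := by ring
        _ ≤ (0.88:ℝ) ^ k * u := by
            apply mul_le_mul_of_nonneg_right (pow_le_pow_left₀ hu.le hc k) hu.le
    have b6 := p88 5
    have b7 := p88 6
    have b8 := p88 7
    have b9 := p88 8
    norm_num at b6 b7 b8 b9
    have hneg : (0:ℝ) ≤ 3.44 - 0.632 * u - 2 * u ^ 2 := by nlinarith
    have hcore : (0:ℝ) < 3.12 - 4 * u - 1.128 * u ^ 2 + 2 * u ^ 3 := by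
      nlinarith [mul_nonneg (sub_nonneg.mpr hc) hneg]
    have hcoreu := mul_pos hu hcore
    have hpoly : 3 - 3 * ((1.128:ℝ) * (u - u ^ 3 / 3 + u ^ 5 / 10 - u ^ 7 / 42 - 5 * u ^ 9 / 864)) <
        2 * (1 - u ^ 2 + (u ^ 2) ^ 2 / 2 - (u ^ 2) ^ 3 / 6 - 5 * (u ^ 2) ^ 4 / 96) +
          (1 - u ^ 2) ^ 2 := by
      have hu5 : (0:ℝ) ≤ u ^ 5 := by positivity
      linarith [hcoreu, b6, b7, b8, b9, hu5]
    rw [erfc_eq_one_sub u hu.le]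
    have heq : 2 * (1 - u ^ 2 + (u ^ 2) ^ 2 / 2 - (u ^ 2) ^ 3 / 6 - 5 * (u ^ 2) ^ 4 / 96) +
        (1 - u ^ 2) ^ 2 ≤ 2 * Real.exp (-u ^ 2) + Real.exp (-u ^ 2) ^ 2 := by linarith
    linarith [hJc, hpoly, heq]
  · -- large u
    have hle := erfc_le hu
    have hE : (0:ℝ) < Real.exp (-u ^ 2) := Real.exp_pos _
    have huπ : (1.5:ℝ) < u * Real.sqrt Real.pi := by
      have h1 : (0.88:ℝ) * 1.772 ≤ u * Real.sqrt Real.pi := by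
        apply mul_le_mul (le_of_lt hc) (le_of_lt sqrt_pi_gt) (by norm_num) (by linarith)
      linarith
    have h3 : 3 * (Real.exp (-u ^ 2) / (u * Real.sqrt Real.pi)) < 2 * Real.exp (-u ^ 2) := by
      rw [show 3 * (Real.exp (-u ^ 2) / (u * Real.sqrt Real.pi)) =
          3 * Real.exp (-u ^ 2) / (u * Real.sqrt Real.pi) by ring,
        div_lt_iff₀ (by linarith)]
      nlinarith
    have hE2 : (0:ℝ) < Real.exp (-u ^ 2) ^ 2 := by positivity
    linarith

/-- The 2-bit per-coordinate information ratio strictly exceeds the 1-bit ratio: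
with `a = σ√(2/π)`, `b = 2σφ(α/σ)`, `p = erfc(α/(σ√2))` for `σ, α > 0`,
`(a + b)²/(1 + 3p) > a²`. -/
theorem stmt_19 (σ α : ℝ) (hσ : 0 < σ) (hα : 0 < α) :
    let a := σ * Real.sqrt (2 / Real.pi)
    let b := 2 * σ * stdNormalPDF (α / σ)
    let p := erfc (α / (σ * Real.sqrt 2))
    a ^ 2 < (a + b) ^ 2 / (1 + 3 * p) := by
  intro a b p
  have hπ : (0:ℝ) < Real.pi := Real.pi_pos
  have hs2 : (0:ℝ) < Real.sqrt 2 := by positivity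
  have hsπ : (0:ℝ) < Real.sqrt Real.pi := Real.sqrt_pos.mpr hπ
  have h2s : (Real.sqrt 2) ^ 2 = 2 := Real.sq_sqrt (by norm_num)
  have hu : 0 < α / (σ * Real.sqrt 2) := by positivity
  set u := α / (σ * Real.sqrt 2) with hu_def
  set E := Real.exp (-u ^ 2) with hE_def
  have hkey : 3 * p < 2 * E + E ^ 2 := key_ineq hu
  have hp0 : 0 ≤ p := by
    show 0 ≤ erfc u
    unfold erfc
    apply mul_nonneg (by positivity)
    exact setIntegral_nonneg measurableSet_Ioi fun x _ => (Real.exp_pos _).le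
  have ha : 0 < a := by
    show 0 < σ * Real.sqrt (2 / Real.pi)
    positivity
  have hbb : b = a * E := by
    show 2 * σ * stdNormalPDF (α / σ) = σ * Real.sqrt (2 / Real.pi) * E
    unfold stdNormalPDF
    have h1 : Real.sqrt (2 * Real.pi) = Real.sqrt 2 * Real.sqrt Real.pi :=
      Real.sqrt_mul (by norm_num) _
    have h2 : Real.sqrt (2 / Real.pi) = Real.sqrt 2 / Real.sqrt Real.pi :=
      Real.sqrt_div (by norm_num) _
    have husq : u ^ 2 = (α / σ) ^ 2 / 2 := by
      rw [hu_def, div_pow, mul_pow, h2s, div_pow]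
      field_simp
    have hexp : -(α / σ) ^ 2 / 2 = -u ^ 2 := by rw [husq]; ring
    rw [hE_def, hexp, h1, h2]
    have hconst : 2 * (Real.sqrt 2 * Real.sqrt Real.pi)⁻¹ = Real.sqrt 2 / Real.sqrt Real.pi := by
      rw [mul_inv]
      field_simp
      nlinarith [h2s, hsπ]
    calc 2 * σ * ((Real.sqrt 2 * Real.sqrt Real.pi)⁻¹ * Real.exp (-u ^ 2))
        = σ * (2 * (Real.sqrt 2 * Real.sqrt Real.pi)⁻¹) * Real.exp (-u ^ 2) := by ring
      _ = σ * (Real.sqrt 2 / Real.sqrt Real.pi) * Real.exp (-u ^ 2) := by rw [hconst]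
  rw [hbb, lt_div_iff₀ (by linarith : (0:ℝ) < 1 + 3 * p)]
  have h4 : a ^ 2 * (1 + 3 * p) < a ^ 2 * (1 + 2 * E + E ^ 2) := by
    apply mul_lt_mul_of_pos_left _ (pow_pos ha 2)
    linarith
  have h5 : (a + a * E) ^ 2 = a ^ 2 * (1 + 2 * E + E ^ 2) := by ring
  linarith
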